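/- Let R be a topological ring with identity and let I, J be two-sided ideals of R that are topologically co-maximal. Then the set IJ + JI (the sum of the set of finite sums of products ij with i ∈ I, j ∈ J and the set of finite sums of products ji) is dense in I ∩ J. In particular, if I and J are in addition closed, then the closure of IJ + JI equals I ∩ J. -/

import Mathlib

open Pointwise

/-- If `I` and `J` are topologically co-maximal two-sided ideals of a topological ring `R`,
then `IJ + JI` (finite sums of products) is dense in `I ∩ J`; if moreover `I` and `J` are
closed, the closure of `IJ + JI` equals `I ∩ J`. -/
theorem prod_add_prod_dense_in_inter {R : Type*} [Ring R] [TopologicalSpace R]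
    [IsTopologicalRing R] [T2Space R] (I J : TwoSidedIdeal R)
    (hTCM : closure ((I : Set R) + (J : Set R)) = Set.univ) :
    ((I : Set R) ∩ (J : Set R) ⊆
      closure ((AddSubmonoid.closure {x : R | ∃ i ∈ I, ∃ j ∈ J, x = i * j} : Set R)
        + (AddSubmonoid.closure {x : R | ∃ j ∈ J, ∃ i ∈ I, x = j * i} : Set R))) ∧
    (IsClosed (I : Set R) → IsClosed (J : Set R) →
      closure ((AddSubmonoid.closure {x : R | ∃ i ∈ I, ∃ j ∈ J, x = i * j} : Set R)
        + (AddSubmonoid.closure {x : R | ∃ j ∈ J, ∃ i ∈ I, x = j * i} : Set R))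
        = (I : Set R) ∩ (J : Set R)) := by
  have hdense : (I : Set R) ∩ (J : Set R) ⊆
      closure ((AddSubmonoid.closure {x : R | ∃ i ∈ I, ∃ j ∈ J, x = i * j} : Set R)
        + (AddSubmonoid.closure {x : R | ∃ j ∈ J, ∃ i ∈ I, x = j * i} : Set R)) := by
    intro x hx
    have h1 : (1 : R) ∈ closure ((I : Set R) + (J : Set R)) := by
      rw [hTCM]; trivial
    have hc : Continuous fun y : R => x * y := continuous_const.mul continuous_id
    have h2 : x ∈ (fun y : R => x * y) '' closure ((I : Set R) + (J : Set R)) :=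
      ⟨1, h1, by simp⟩
    have h3 := image_closure_subset_closure_image hc h2
    refine closure_mono ?_ h3
    rintro _ ⟨y, hy, rfl⟩
    rcases Set.mem_add.mp hy with ⟨a, ha, b, hb, rfl⟩
    simp only
    rw [mul_add, add_comm (x * a) (x * b)]
    exact Set.add_mem_add
      (AddSubmonoid.subset_closure ⟨x, hx.1, b, hb, rfl⟩)
      (AddSubmonoid.subset_closure ⟨x, hx.2, a, ha, rfl⟩)
  refine ⟨hdense, fun hI hJ => ?_⟩
  apply subset_antisymm
  · have hS₁ : (AddSubmonoid.closure {x : R | ∃ i ∈ I, ∃ j ∈ J, x = i * j} : Set R)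
        ⊆ (I : Set R) ∩ (J : Set R) := by
      intro x hx
      induction hx using AddSubmonoid.closure_induction with
      | mem x h =>
        obtain ⟨i, hi, j, hj, rfl⟩ := h
        exact ⟨I.mul_mem_right _ _ hi, J.mul_mem_left _ _ hj⟩
      | zero => exact ⟨I.zero_mem, J.zero_mem⟩
      | add x y _ _ hx hy => exact ⟨I.add_mem hx.1 hy.1, J.add_mem hx.2 hy.2⟩
    have hS₂ : (AddSubmonoid.closure {x : R | ∃ j ∈ J, ∃ i ∈ I, x = j * i} : Set R)
        ⊆ (I : Set R) ∩ (J : Set R) := by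
      intro x hx
      induction hx using AddSubmonoid.closure_induction with
      | mem x h =>
        obtain ⟨j, hj, i, hi, rfl⟩ := h
        exact ⟨I.mul_mem_left _ _ hi, J.mul_mem_right _ _ hj⟩
      | zero => exact ⟨I.zero_mem, J.zero_mem⟩
      | add x y _ _ hx hy => exact ⟨I.add_mem hx.1 hy.1, J.add_mem hx.2 hy.2⟩
    have hsub : ((AddSubmonoid.closure {x : R | ∃ i ∈ I, ∃ j ∈ J, x = i * j} : Set R)
        + (AddSubmonoid.closure {x : R | ∃ j ∈ J, ∃ i ∈ I, x = j * i} : Set R))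
        ⊆ (I : Set R) ∩ (J : Set R) := by
      rintro _ ⟨a, ha, b, hb, rfl⟩
      exact ⟨I.add_mem (hS₁ ha).1 (hS₂ hb).1, J.add_mem (hS₁ ha).2 (hS₂ hb).2⟩
    calc closure _ ⊆ closure ((I : Set R) ∩ (J : Set R)) := closure_mono hsub
      _ = (I : Set R) ∩ (J : Set R) := (hI.inter hJ).closure_eq
  · exact hdense
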